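/- arXiv:1307.6429 — 2 statements merged into one kernel-verified Lean document; each statement's English description precedes it below -/
import Mathlib

section
/- Let ℬ = ⟨B_1, …, B_m⟩ ≤ M(n, 𝔽) be triangularizable over an extension field 𝔽' (i.e., B_i = D B_i' C⁻¹ with C, D ∈ GL(n, 𝔽') and each B_i' upper triangular). Suppose there exist j ∈ [m] and a nonzero subspace U ≤ 𝔽ⁿ with B_j(U) = ℬ(U) and dim(U) = dim(B_j(U)). Then the induced matrix space ℬ* = ⟨B_1*, …, B_m*⟩ of maps 𝔽ⁿ/U → 𝔽ⁿ/ℬ(U) is triangularizable over 𝔽'. -/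
open Submodule Module

/-- The image of a subspace `U` under a matrix space `A`: the span of all `a u`. -/
def msImage {F V V' : Type*} [Field F] [AddCommGroup V] [Module F V]
    [AddCommGroup V'] [Module F V']
    (A : Submodule F (V →ₗ[F] V')) (U : Submodule F V) : Submodule F V' :=
  Submodule.span F {x | ∃ a ∈ A, ∃ u ∈ U, a u = x}

/-- A set of linear maps `V → W` (between spaces of dimension `n`) is simultaneously
triangularizable iff there are complete flags of `V` and `W` such that each map sends
the `i`-th member of the first flag into the `i`-th member of the second. -/
def IsTriangularizable (K : Type*) [Field K] {V W : Type*} [AddCommGroup V] [Module K V]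
    [AddCommGroup W] [Module K W] (n : ℕ) (S : Set (V →ₗ[K] W)) : Prop :=
  ∃ (fV : ℕ → Submodule K V) (fW : ℕ → Submodule K W),
    (∀ i, fV i ≤ fV (i + 1)) ∧ (∀ i, fW i ≤ fW (i + 1)) ∧
    fV 0 = ⊥ ∧ fW 0 = ⊥ ∧ fV n = ⊤ ∧ fW n = ⊤ ∧
    (∀ i ≤ n, finrank K (fV i) = i) ∧ (∀ i ≤ n, finrank K (fW i) = i) ∧
    ∀ f ∈ S, ∀ i, Submodule.map f (fV i) ≤ fW i

section AuxGeneral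

open LinearMap

variable {K X Y : Type*} [Field K] [AddCommGroup X] [Module K X]
  [AddCommGroup Y] [Module K Y]

/-- Rank-nullity for a restricted map. -/
lemma aux_finrank_map_add (f : X →ₗ[K] Y) [FiniteDimensional K X] (p : Submodule K X) :
    finrank K (p.map f) + finrank K (p ⊓ ker f : Submodule K X) = finrank K p := by
  have h := LinearMap.finrank_range_add_finrank_ker (f.domRestrict p)
  rw [LinearMap.range_domRestrict, LinearMap.ker_domRestrict] at h
  rwa [← Submodule.finrank_map_subtype_eq p (comap p.subtype (ker f)),
    Submodule.map_comap_subtype] at h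

/-- Between nested subspaces one can find a subspace of any intermediate dimension. -/
lemma aux_exists_between [FiniteDimensional K X] :
    ∀ (d : ℕ) (p q : Submodule K X), p ≤ q → finrank K p + d ≤ finrank K q →
    ∃ r, p ≤ r ∧ r ≤ q ∧ finrank K r = finrank K p + d := by
  intro d
  induction d with
  | zero => exact fun p q hpq _ => ⟨p, le_rfl, hpq, by omega⟩
  | succ d ih =>
    intro p q hpq hle
    have hx : ∃ x ∈ q, x ∉ p := by
      by_contra hcon
      push_neg at hcon
      have : finrank K q ≤ finrank K p := Submodule.finrank_mono hcon
      omega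
    obtain ⟨x, hxq, hxp⟩ := hx
    have hx0 : x ≠ 0 := fun h => hxp (h ▸ p.zero_mem)
    have hdis : Disjoint p (span K {x}) := by
      rw [Submodule.disjoint_span_singleton]
      exact fun h => absurd h hxp
    have hfr : finrank K (p ⊔ span K {x} : Submodule K X) = finrank K p + 1 := by
      have h1 := Submodule.finrank_sup_add_finrank_inf_eq p (span K {x})
      rw [finrank_span_singleton hx0, hdis.eq_bot, finrank_bot] at h1
      omega
    have hp'q : p ⊔ span K {x} ≤ q := sup_le hpq (span_le.mpr (by simpa using hxq))
    obtain ⟨r, h1, h2, h3⟩ := ih (p ⊔ span K {x}) q hp'q (by omega)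
    exact ⟨r, le_trans le_sup_left h1, h2, by omega⟩

open scoped Classical in
/-- A chain of subspaces `p k` with `finrank (p k) ≤ k` can be completed to a full flag. -/
lemma aux_exists_flag [FiniteDimensional K Y] (ℓ : ℕ) (hfr : finrank K Y = ℓ)
    (p : ℕ → Submodule K Y)
    (hmono : ∀ k, k + 1 ≤ ℓ → p k ≤ p (k + 1))
    (hd : ∀ k ≤ ℓ, finrank K (p k) ≤ k) :
    ∃ g : ℕ → Submodule K Y, (∀ k, g k ≤ g (k + 1)) ∧ g 0 = ⊥ ∧ g ℓ = ⊤ ∧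
      (∀ k ≤ ℓ, finrank K (g k) = k) ∧ (∀ k ≤ ℓ, p k ≤ g k) ∧
      (∀ k, ℓ ≤ k → g k = ⊤) := by
  -- descending construction
  let h : ℕ → Submodule K Y := fun t => Nat.rec (motive := fun _ => Submodule K Y)
    (⊤ : Submodule K Y) (fun t ht =>
    if hEx : ∃ r, p (ℓ - (t + 1)) ≤ r ∧ r ≤ ht ∧ finrank K r = ℓ - (t + 1) then hEx.choose
    else ⊤) t
  have hsucc : ∀ t, h (t + 1) =
      if hEx : ∃ r, p (ℓ - (t + 1)) ≤ r ∧ r ≤ h t ∧ finrank K r = ℓ - (t + 1) then hEx.choose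
      else ⊤ := fun t => rfl
  have hinv : ∀ t, t ≤ ℓ → p (ℓ - t) ≤ h t ∧ finrank K (h t) = ℓ - t ∧
      (∀ s, t = s + 1 → h t ≤ h s) := by
    intro t
    induction t with
    | zero =>
      intro _
      refine ⟨le_top, ?_, fun s hs => absurd hs.symm (Nat.succ_ne_zero s)⟩
      show finrank K (⊤ : Submodule K Y) = ℓ - 0
      rw [finrank_top, hfr, Nat.sub_zero]
    | succ t ih =>
      intro hle
      obtain ⟨hp, hr, -⟩ := ih (by omega)
      have hEx : ∃ r, p (ℓ - (t + 1)) ≤ r ∧ r ≤ h t ∧ finrank K r = ℓ - (t + 1) := by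
        have harith : (ℓ - (t + 1)) + 1 = ℓ - t := by omega
        have hple : p (ℓ - (t + 1)) ≤ p (ℓ - t) := by
          have := hmono (ℓ - (t + 1)) (by omega)
          rwa [harith] at this
        have h1 : finrank K (p (ℓ - (t + 1))) ≤ ℓ - (t + 1) := hd _ (by omega)
        obtain ⟨r, hr1, hr2, hr3⟩ := aux_exists_between
          (ℓ - (t + 1) - finrank K (p (ℓ - (t + 1)))) (p (ℓ - (t + 1))) (h t)
          (hple.trans hp) (by omega)
        exact ⟨r, hr1, hr2, by omega⟩
      rw [hsucc t, dif_pos hEx]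
      obtain ⟨h1, h2, h3⟩ := hEx.choose_spec
      refine ⟨h1, h3, fun s hs => ?_⟩
      have : s = t := by omega
      subst this
      exact h2
  set g : ℕ → Submodule K Y := fun k => if k ≤ ℓ then h (ℓ - k) else ⊤ with hgdef
  have hgk : ∀ k, g k = if k ≤ ℓ then h (ℓ - k) else ⊤ := fun k => rfl
  refine ⟨g, ?_, ?_, ?_, ?_, ?_, ?_⟩
  · intro k
    rw [hgk k, hgk (k + 1)]
    by_cases hk1 : k + 1 ≤ ℓ
    · rw [if_pos (by omega), if_pos hk1]
      have harith : ℓ - k = (ℓ - (k + 1)) + 1 := by omega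
      have := (hinv (ℓ - k) (by omega)).2.2 (ℓ - (k + 1)) harith
      exact this
    · by_cases hk : k ≤ ℓ
      · rw [if_neg hk1]; exact le_top
      · rw [if_neg hk, if_neg hk1]
  · rw [hgk 0, if_pos (by omega), Nat.sub_zero]
    have := (hinv ℓ le_rfl).2.1
    rw [Nat.sub_self] at this
    rw [← Submodule.finrank_eq_zero (R := K)]
    exact this
  · rw [hgk ℓ, if_pos le_rfl, Nat.sub_self]; rfl
  · intro k hk
    rw [hgk k, if_pos hk]
    have := (hinv (ℓ - k) (by omega)).2.1
    rw [this]; omega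
  · intro k hk
    rw [hgk k, if_pos hk]
    have := (hinv (ℓ - k) (by omega)).1
    rwa [Nat.sub_sub_self hk] at this
  · intro k hk
    rw [hgk k]
    by_cases hk' : k ≤ ℓ
    · have : k = ℓ := le_antisymm hk' hk
      subst this
      rw [if_pos le_rfl, Nat.sub_self]; rfl
    · rw [if_neg hk']

/-- Triangularizability descends to quotients along surjections, provided some map of the
family restricts to an injection between the kernels. -/
lemma aux_descend {X' Y' ι : Type*}
    [AddCommGroup X'] [Module K X'] [AddCommGroup Y'] [Module K Y']
    [FiniteDimensional K X] [FiniteDimensional K Y]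
    [FiniteDimensional K X'] [FiniteDimensional K Y']
    (S : ι → X →ₗ[K] Y) (T : ι → X' →ₗ[K] Y') (π : X →ₗ[K] X') (π' : Y →ₗ[K] Y')
    (hπ : Function.Surjective π)
    (hcomm : ∀ i, π' ∘ₗ S i = T i ∘ₗ π)
    (n : ℕ) (htri : IsTriangularizable K n (Set.range S))
    (j : ι) (hinj : Disjoint (LinearMap.ker π) (LinearMap.ker (S j)))
    (hkj : Submodule.map (S j) (LinearMap.ker π) ≤ LinearMap.ker π')
    (hYX : finrank K Y' = finrank K X') :
    IsTriangularizable K (finrank K X') (Set.range T) := by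
  obtain ⟨fV, fW, hVs, hWs, hV0, hW0, hVn, hWn, hVr, hWr, hmaps⟩ := htri
  have hVmono : Monotone fV := monotone_nat_of_le_succ hVs
  have hWmono : Monotone fW := monotone_nat_of_le_succ hWs
  set ℓ := finrank K X' with hl
  set qV : ℕ → Submodule K X' := fun i => (fV i).map π with hqVdef
  set qW : ℕ → Submodule K Y' := fun i => (fW i).map π' with hqWdef
  have hqVmono : Monotone qV := fun a b hab => Submodule.map_mono (hVmono hab)
  have hqWmono : Monotone qW := fun a b hab => Submodule.map_mono (hWmono hab)
  have hSj : ∀ i, Submodule.map (S j) (fV i) ≤ fW i := fun i => hmaps (S j) ⟨j, rfl⟩ i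
  have key : ∀ i, finrank K (fV i ⊓ ker π : Submodule K X) ≤
      finrank K (fW i ⊓ ker π' : Submodule K Y) := by
    intro i
    have h1 : Submodule.map (S j) (fV i ⊓ ker π) ≤ fW i ⊓ ker π' :=
      le_inf ((Submodule.map_mono inf_le_left).trans (hSj i))
        ((Submodule.map_mono inf_le_right).trans hkj)
    have h2 := aux_finrank_map_add (S j) (fV i ⊓ ker π)
    have h3 : (fV i ⊓ ker π) ⊓ ker (S j) = ⊥ := by
      have h4 : (fV i ⊓ ker π) ⊓ ker (S j) ≤ ker π ⊓ ker (S j) :=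
        inf_le_inf_right _ inf_le_right
      rw [hinj.eq_bot] at h4
      exact le_bot_iff.mp h4
    rw [h3, finrank_bot] at h2
    have h5 := Submodule.finrank_mono h1
    omega
  have hqV : ∀ i ≤ n, finrank K (qV i) + finrank K (fV i ⊓ ker π : Submodule K X) = i := by
    intro i hi
    have h := aux_finrank_map_add π (fV i)
    rw [hVr i hi] at h
    exact h
  have hqW : ∀ i ≤ n, finrank K (qW i) + finrank K (fW i ⊓ ker π' : Submodule K Y) = i := by
    intro i hi
    have h := aux_finrank_map_add π' (fW i)
    rw [hWr i hi] at h
    exact h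
  have hqVn : qV n = ⊤ := by
    rw [hqVdef]
    simp only [hVn, Submodule.map_top]
    exact range_eq_top.mpr hπ
  have hqVnf : finrank K (qV n) = ℓ := by rw [hqVn]; exact finrank_top K X'
  set I : ℕ → ℕ := fun k => sInf {i | k ≤ finrank K (qV i)} with hI
  have hmem : ∀ k ≤ ℓ, n ∈ {i | k ≤ finrank K (qV i)} := fun k hk => by
    simp only [Set.mem_setOf_eq, hqVnf]; exact hk
  have hIn : ∀ k ≤ ℓ, I k ≤ n := fun k hk => Nat.sInf_le (hmem k hk)
  have hIk : ∀ k ≤ ℓ, k ≤ finrank K (qV (I k)) := fun k hk =>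
    Nat.sInf_mem (⟨n, hmem k hk⟩ : {i | k ≤ finrank K (qV i)}.Nonempty)
  have hstep : ∀ i, i + 1 ≤ n → finrank K (qV (i + 1)) ≤ finrank K (qV i) + 1 := by
    intro i hi
    have h1 := hqV i (by omega)
    have h2 := hqV (i + 1) hi
    have h3 : finrank K (fV i ⊓ ker π : Submodule K X) ≤
        finrank K (fV (i + 1) ⊓ ker π : Submodule K X) :=
      Submodule.finrank_mono (inf_le_inf_right _ (hVs i))
    omega
  have hIfr : ∀ k ≤ ℓ, finrank K (qV (I k)) = k := by
    intro k hk
    refine le_antisymm ?_ (hIk k hk)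
    cases hIc : I k with
    | zero =>
      have h0 : qV 0 = ⊥ := by rw [hqVdef]; simp [hV0]
      rw [h0, finrank_bot]
      exact Nat.zero_le k
    | succ t =>
      have htn : t + 1 ≤ n := hIc ▸ hIn k hk
      have hnot : t ∉ {i | k ≤ finrank K (qV i)} :=
        Nat.notMem_of_lt_sInf (show t < I k by omega)
      simp only [Set.mem_setOf_eq, not_le] at hnot
      have := hstep t htn
      omega
  have hImono : ∀ k k', k ≤ k' → k' ≤ ℓ → I k ≤ I k' := fun k k' hkk' hk' =>
    Nat.sInf_le (le_trans hkk' (hIk k' hk'))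
  -- the flag on X'
  set gV : ℕ → Submodule K X' := fun k => if k ≤ ℓ then qV (I k) else ⊤ with hgVdef
  have hgVk : ∀ k, gV k = if k ≤ ℓ then qV (I k) else ⊤ := fun k => rfl
  -- the flag on Y'
  obtain ⟨gW, hg1, hg2, hg3, hg4, hg5, hg6⟩ := aux_exists_flag ℓ (hYX.trans hl.symm)
    (fun k => qW (I k))
    (fun k hk => hqWmono (hImono k (k + 1) (by omega) hk))
    (fun k hk => by
      show finrank K (qW (I k)) ≤ k
      have h1 := hqW (I k) (hIn k hk)
      have h2 := hqV (I k) (hIn k hk)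
      have h3 := key (I k)
      have h4 := hIfr k hk
      omega)
  refine ⟨gV, gW, ?_, hg1, ?_, hg2, ?_, hg3, ?_, hg4, ?_⟩
  · intro k
    rw [hgVk k, hgVk (k + 1)]
    by_cases hk1 : k + 1 ≤ ℓ
    · rw [if_pos (by omega), if_pos hk1]
      exact hqVmono (hImono k (k + 1) (by omega) hk1)
    · by_cases hk : k ≤ ℓ
      · rw [if_neg hk1]; exact le_top
      · rw [if_neg hk, if_neg hk1]
  · rw [hgVk 0, if_pos (by omega)]
    rw [← Submodule.finrank_eq_zero (R := K)]
    have := hIfr 0 (by omega)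
    omega
  · rw [hgVk ℓ, if_pos le_rfl]
    exact Submodule.eq_top_of_finrank_eq ((hIfr ℓ le_rfl).trans hl)
  · intro k hk
    rw [hgVk k, if_pos hk]
    exact hIfr k hk
  · rintro f ⟨i, rfl⟩ k
    by_cases hk : k ≤ ℓ
    · rw [hgVk k, if_pos hk]
      have h1 : Submodule.map (T i) (qV (I k)) ≤ qW (I k) := by
        rw [hqVdef]
        simp only
        rw [← Submodule.map_comp, ← hcomm i, Submodule.map_comp]
        exact Submodule.map_mono (hmaps (S i) ⟨i, rfl⟩ (I k))
      exact h1.trans (hg5 k hk)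
    · rw [hg6 k (by omega)]
      exact le_top

end AuxGeneral

section AuxBaseChange

open LinearMap TensorProduct

variable {F F' : Type*} [Field F] [Field F'] [Algebra F F']
variable {X Y : Type*} [AddCommGroup X] [Module F X] [AddCommGroup Y] [Module F Y]

lemma aux_bc_span (p : Submodule F X) :
    p.baseChange F' = span F' ((TensorProduct.mk F F' X 1) '' (p : Set X)) := by
  rw [Submodule.baseChange_eq_span, Submodule.map_coe]

lemma aux_bc_map (f : X →ₗ[F] Y) (p : Submodule F X) :
    Submodule.map (f.baseChange F') (p.baseChange F') = (Submodule.map f p).baseChange F' := by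
  apply le_antisymm
  · rw [aux_bc_span, Submodule.map_span, Submodule.span_le]
    rintro _ ⟨_, ⟨u, hu, rfl⟩, rfl⟩
    simpa using Submodule.tmul_mem_baseChange_of_mem (1 : F') (Submodule.mem_map_of_mem hu)
  · rw [aux_bc_span, Submodule.span_le]
    rintro _ ⟨y, hy, rfl⟩
    obtain ⟨u, hu, rfl⟩ := hy
    exact ⟨(1 : F') ⊗ₜ u, Submodule.tmul_mem_baseChange_of_mem 1 hu, by simp⟩

lemma aux_bc_finrank [FiniteDimensional F X] (p : Submodule F X) :
    finrank F' (p.baseChange F') = finrank F p := by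
  have hr : LinearMap.range ((p.subtype).baseChange F') = p.baseChange F' := by
    apply le_antisymm
    · rintro x ⟨y, rfl⟩
      induction y using TensorProduct.induction_on with
      | zero => simp
      | tmul a u => simpa using Submodule.tmul_mem_baseChange_of_mem a u.2
      | add y z hy hz => rw [map_add]; exact Submodule.add_mem _ hy hz
    · rw [aux_bc_span, Submodule.span_le]
      rintro _ ⟨u, hu, rfl⟩
      exact ⟨(1 : F') ⊗ₜ (⟨u, hu⟩ : p), by simp⟩
  have hinj : Function.Injective ((p.subtype).baseChange F') := by
    rw [LinearMap.baseChange_eq_ltensor]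
    exact Module.Flat.lTensor_preserves_injective_linearMap _ (Submodule.injective_subtype p)
  rw [← hr, LinearMap.finrank_range_of_inj hinj, Module.finrank_baseChange]

lemma aux_bc_surj (f : X →ₗ[F] Y) (hf : Function.Surjective f) :
    Function.Surjective (f.baseChange F') := by
  rw [LinearMap.baseChange_eq_ltensor]
  exact LinearMap.lTensor_surjective F' hf

lemma aux_bc_ker (p : Submodule F X) [FiniteDimensional F X] :
    LinearMap.ker ((p.mkQ).baseChange F') = p.baseChange F' := by
  have hle : p.baseChange F' ≤ LinearMap.ker ((p.mkQ).baseChange F') := by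
    rw [aux_bc_span, Submodule.span_le]
    rintro _ ⟨u, hu, rfl⟩
    simp [LinearMap.mem_ker, (Submodule.Quotient.mk_eq_zero p).mpr hu]
  have h2 := LinearMap.finrank_range_add_finrank_ker ((p.mkQ).baseChange F')
  rw [range_eq_top.mpr (aux_bc_surj _ (Submodule.mkQ_surjective p)), finrank_top,
    Module.finrank_baseChange, Module.finrank_baseChange] at h2
  have h3 := Submodule.finrank_quotient_add_finrank p
  have h4 := aux_bc_finrank (F' := F') p
  exact (eq_of_le_of_finrank_le hle (by omega)).symm

end AuxBaseChange

open LinearMap TensorProduct in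
theorem stmt16 (F F' : Type*) [Field F] [Field F'] [Algebra F F'] (n m : ℕ)
    (B : Fin m → ((Fin n → F) →ₗ[F] (Fin n → F)))
    -- ℬ = ⟨B_1, …, B_m⟩ is triangularizable over the extension field F'
    (htri : IsTriangularizable F' n
      (Set.range fun i => LinearMap.baseChange F' (B i)))
    (j : Fin m) (U : Submodule F (Fin n → F)) (hU : U ≠ ⊥)
    (hBU : Submodule.map (B j) U = msImage (Submodule.span F (Set.range B)) U)
    (hdim : finrank F U = finrank F (Submodule.map (B j) U))
    (hsub : ∀ i, U ≤ (msImage (Submodule.span F (Set.range B)) U).comap (B i)) :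
    -- the induced matrix space ℬ* on the quotients is triangularizable over F'
    IsTriangularizable F' (finrank F ((Fin n → F) ⧸ U))
      (Set.range fun i => LinearMap.baseChange F'
        (Submodule.mapQ U (msImage (Submodule.span F (Set.range B)) U) (B i) (hsub i))) := by
  set 𝔅 := msImage (Submodule.span F (Set.range B)) U with h𝔅
  set π : (F' ⊗[F] (Fin n → F)) →ₗ[F'] F' ⊗[F] ((Fin n → F) ⧸ U) :=
    (U.mkQ).baseChange F' with hπdef
  set π' : (F' ⊗[F] (Fin n → F)) →ₗ[F'] F' ⊗[F] ((Fin n → F) ⧸ 𝔅) :=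
    (𝔅.mkQ).baseChange F' with hπ'def
  have hπ : Function.Surjective π := aux_bc_surj _ (Submodule.mkQ_surjective U)
  have hcomm : ∀ i, π' ∘ₗ (B i).baseChange F' =
      ((Submodule.mapQ U 𝔅 (B i) (hsub i)).baseChange F') ∘ₗ π := by
    intro i
    rw [hπdef, hπ'def, ← LinearMap.baseChange_comp, ← LinearMap.baseChange_comp,
      Submodule.mapQ_mkQ]
  have hkerπ : LinearMap.ker π = U.baseChange F' := aux_bc_ker U
  have hfr𝔅 : finrank F 𝔅 = finrank F U := by rw [← hBU]; exact hdim.symm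
  have hmapj : Submodule.map ((B j).baseChange F') (LinearMap.ker π) = 𝔅.baseChange F' := by
    rw [hkerπ, aux_bc_map, hBU]
  have hinj : Disjoint (LinearMap.ker π) (LinearMap.ker ((B j).baseChange F')) := by
    apply Submodule.disjoint_ker_of_finrank_le ((B j).baseChange F')
    rw [hmapj, aux_bc_finrank, hkerπ, aux_bc_finrank, hfr𝔅]
  have hkj : Submodule.map ((B j).baseChange F') (LinearMap.ker π) ≤ LinearMap.ker π' := by
    rw [hmapj]
    exact le_of_eq (aux_bc_ker 𝔅).symm
  have hYX : finrank F' (F' ⊗[F] ((Fin n → F) ⧸ 𝔅)) =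
      finrank F' (F' ⊗[F] ((Fin n → F) ⧸ U)) := by
    rw [Module.finrank_baseChange, Module.finrank_baseChange]
    have h1 := Submodule.finrank_quotient_add_finrank U
    have h2 := Submodule.finrank_quotient_add_finrank 𝔅
    omega
  have hmain := aux_descend (S := fun i => (B i).baseChange F')
    (T := fun i => (Submodule.mapQ U 𝔅 (B i) (hsub i)).baseChange F')
    π π' hπ hcomm n htri j hinj hkj hYX
  rwa [Module.finrank_baseChange] at hmain
end

section
/- Let ℬ = ⟨B_1, …, B_m⟩ ≤ M(n, 𝔽), let A ∈ M(n, 𝔽) be nonsingular, and define in M(2n, 𝔽) the matrices Y_i = [[A, B_i],[0,0]] and Z = [[0,0],[A,0]] (block form with n×n blocks). Let 𝒜 = ⟨Y_1, …, Y_m, Z⟩. Then disc(𝒜) = disc(ℬ), where disc(𝒞) = max{dim(U) − dim(𝒞(U)) : U a subspace}. -/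
open Submodule Module

open scoped Matrix

lemma msImage_span {F V V' : Type*} [Field F] [AddCommGroup V] [Module F V]
    [AddCommGroup V'] [Module F V']
    (S : Set (V →ₗ[F] V')) (U : Submodule F V) :
    msImage (Submodule.span F S) U = Submodule.span F {x | ∃ a ∈ S, ∃ u ∈ U, a u = x} := by
  apply le_antisymm
  · rw [msImage, span_le]
    rintro x ⟨a, ha, u, hu, rfl⟩
    induction ha using Submodule.span_induction with
    | mem a haS => exact subset_span ⟨a, haS, u, hu, rfl⟩
    | zero => simpa using zero_mem _
    | add a b _ _ iha ihb => simpa using add_mem iha ihb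
    | smul c a _ iha => simpa using smul_mem _ c iha
  · rw [span_le]
    rintro x ⟨a, ha, u, hu, rfl⟩
    exact subset_span ⟨a, subset_span ha, u, hu, rfl⟩

lemma finrank_map_add_finrank_inf_ker {F V V' : Type*} [Field F] [AddCommGroup V] [Module F V]
    [AddCommGroup V'] [Module F V'] [FiniteDimensional F V]
    (f : V →ₗ[F] V') (p : Submodule F V) :
    finrank F (p.map f) + finrank F (p ⊓ LinearMap.ker f : Submodule F V) = finrank F p := by
  have h := LinearMap.finrank_range_add_finrank_ker (f.domRestrict p)
  rw [LinearMap.range_domRestrict, LinearMap.ker_domRestrict] at h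
  have h2 : finrank F ((LinearMap.ker f).comap p.subtype) =
      finrank F (p ⊓ LinearMap.ker f : Submodule F V) := by
    rw [← Submodule.map_comap_subtype]
    exact (Submodule.equivMapOfInjective _ (Submodule.injective_subtype p) _).finrank_eq
  omega

section aux
variable (F : Type*) [Field F] (n : ℕ)

def iL : (Fin n → F) →ₗ[F] (Fin n ⊕ Fin n → F) where
  toFun u := Sum.elim u 0
  map_add' u v := by funext x; cases x <;> simp
  map_smul' c u := by funext x; cases x <;> simp

def iR : (Fin n → F) →ₗ[F] (Fin n ⊕ Fin n → F) where
  toFun u := Sum.elim 0 u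
  map_add' u v := by funext x; cases x <;> simp
  map_smul' c u := by funext x; cases x <;> simp

lemma iL_inj : Function.Injective (iL F n) :=
  fun u v h => funext fun x => congrFun h (Sum.inl x)

lemma iR_inj : Function.Injective (iR F n) :=
  fun u v h => funext fun x => congrFun h (Sum.inr x)

variable {F n}

lemma Z_apply_iR (A : Matrix (Fin n) (Fin n) F) (w : Fin n → F) :
    (Matrix.fromBlocks (0 : Matrix (Fin n) (Fin n) F) 0 A 0).mulVecLin (iR F n w) = 0 := by
  funext x
  cases x <;>
    simp [iR, Matrix.mulVecLin_apply, Matrix.fromBlocks_mulVec, Sum.elim_comp_inl,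
      Sum.elim_comp_inr]

lemma Y_apply_iR (A Bi : Matrix (Fin n) (Fin n) F) (w : Fin n → F) :
    (Matrix.fromBlocks A Bi (0 : Matrix (Fin n) (Fin n) F) 0).mulVecLin (iR F n w) = iL F n (Bi *ᵥ w) := by
  funext x
  cases x <;>
    simp [iR, iL, Matrix.mulVecLin_apply, Matrix.fromBlocks_mulVec, Sum.elim_comp_inl,
      Sum.elim_comp_inr]

lemma pR_Z_apply (A : Matrix (Fin n) (Fin n) F) (w : Fin n ⊕ Fin n → F) :
    LinearMap.funLeft F F Sum.inr ((Matrix.fromBlocks (0 : Matrix (Fin n) (Fin n) F) 0 A 0).mulVecLin w)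
      = A *ᵥ (LinearMap.funLeft F F Sum.inl w) := by
  funext x
  simp [LinearMap.funLeft, Matrix.mulVecLin_apply, Matrix.fromBlocks_mulVec]

lemma pR_iL_apply (v : Fin n → F) :
    LinearMap.funLeft F F Sum.inr (iL F n v) = 0 := by
  funext x; simp [LinearMap.funLeft, iL]

end aux

theorem stmt19 (F : Type*) [Field F] (n m : ℕ)
    (B : Fin m → Matrix (Fin n) (Fin n) F)
    (A : Matrix (Fin n) (Fin n) F) (hA : IsUnit A) :
    -- disc(𝒜) = disc(ℬ), where 𝒜 = ⟨Y_1, …, Y_m, Z⟩ with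
    -- Y_i = [[A, B_i],[0,0]] and Z = [[0,0],[A,0]]:
    -- for every c, 𝒜 has a c-discrepancy subspace iff ℬ does
    ∀ c : ℕ,
      (∃ U : Submodule F (Fin n ⊕ Fin n → F),
        finrank F (msImage (Submodule.span F
            (insert (Matrix.fromBlocks 0 0 A 0).mulVecLin
              (Set.range fun i => (Matrix.fromBlocks A (B i) 0 0).mulVecLin))) U)
          + c ≤ finrank F U) ↔
      (∃ U : Submodule F (Fin n → F),
        finrank F (msImage (Submodule.span F
            (Set.range fun i => (B i).mulVecLin)) U) + c ≤ finrank F U) := by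
  intro c
  constructor
  · -- hard direction
    rintro ⟨U', hU'⟩
    set π1 := LinearMap.funLeft F F (Sum.inl : Fin n → Fin n ⊕ Fin n) with hπ1
    set π2 := LinearMap.funLeft F F (Sum.inr : Fin n → Fin n ⊕ Fin n) with hπ2
    set W := msImage (Submodule.span F
        (insert (Matrix.fromBlocks 0 0 A 0).mulVecLin
          (Set.range fun i => (Matrix.fromBlocks A (B i) 0 0).mulVecLin))) U' with hWdef
    refine ⟨U'.comap (iR F n), ?_⟩
    set U := U'.comap (iR F n) with hUdef
    have hIa := finrank_map_add_finrank_inf_ker π1 U'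
    have hinf : U' ⊓ LinearMap.ker π1 = U.map (iR F n) := by
      ext w
      simp only [Submodule.mem_inf, LinearMap.mem_ker, Submodule.mem_map, Submodule.mem_comap,
        hπ1, LinearMap.funLeft_apply]
      constructor
      · rintro ⟨hw, hk⟩
        have hwe : iR F n (w ∘ Sum.inr) = w := by
          funext x
          cases x with
          | inl a => exact (congrFun hk a).symm
          | inr a => rfl
        exact ⟨w ∘ Sum.inr, show iR F n (w ∘ Sum.inr) ∈ U' by rw [hwe]; exact hw, hwe⟩
      · rintro ⟨u, hu, rfl⟩
        refine ⟨hu, ?_⟩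
        funext x
        simp [iR]
    have hKU : finrank F (U' ⊓ LinearMap.ker π1 : Submodule F (Fin n ⊕ Fin n → F))
        = finrank F U := by
      rw [hinf]
      exact ((Submodule.equivMapOfInjective _ (iR_inj F n) U).finrank_eq).symm
    have hII := finrank_map_add_finrank_inf_ker π2 W
    have hBW : (msImage (Submodule.span F (Set.range fun i => (B i).mulVecLin)) U).map (iL F n)
        ≤ W ⊓ LinearMap.ker π2 := by
      rw [msImage_span, Submodule.map_span, Submodule.span_le]
      rintro x ⟨y, ⟨a, ⟨i, rfl⟩, u, hu, rfl⟩, rfl⟩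
      simp only [SetLike.mem_coe, Submodule.mem_inf]
      constructor
      · have he : iL F n ((B i).mulVecLin u)
            = (Matrix.fromBlocks A (B i) 0 0).mulVecLin (iR F n u) := by
          rw [Y_apply_iR, Matrix.mulVecLin_apply]
        rw [he]
        exact Submodule.subset_span
          ⟨(Matrix.fromBlocks A (B i) 0 0).mulVecLin,
            Submodule.subset_span (Set.mem_insert_of_mem _ ⟨i, rfl⟩), iR F n u, hu, rfl⟩
      · rw [LinearMap.mem_ker]
        exact pR_iL_apply _
    have hIII : finrank F (msImage (Submodule.span F (Set.range fun i => (B i).mulVecLin)) U)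
        ≤ finrank F (W ⊓ LinearMap.ker π2 : Submodule F (Fin n ⊕ Fin n → F)) := by
      calc finrank F (msImage (Submodule.span F (Set.range fun i => (B i).mulVecLin)) U)
          = finrank F ((msImage (Submodule.span F
              (Set.range fun i => (B i).mulVecLin)) U).map (iL F n)) :=
            (Submodule.equivMapOfInjective _ (iL_inj F n) _).finrank_eq
        _ ≤ _ := Submodule.finrank_mono hBW
    have hZW : (U'.map π1).map A.mulVecLin ≤ W.map π2 := by
      rintro x ⟨y, ⟨w, hw, rfl⟩, rfl⟩
      refine ⟨(Matrix.fromBlocks 0 0 A 0).mulVecLin w,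
        Submodule.subset_span ⟨_, Submodule.subset_span (Set.mem_insert _ _), w, hw, rfl⟩, ?_⟩
      rw [hπ2]
      rw [pR_Z_apply, Matrix.mulVecLin_apply, hπ1]
    have hIV : finrank F (U'.map π1) ≤ finrank F (W.map π2) := by
      have hinj : Function.Injective A.mulVecLin := by
        rw [Matrix.coe_mulVecLin]
        exact Matrix.mulVec_injective_iff_isUnit.mpr hA
      calc finrank F (U'.map π1) = finrank F ((U'.map π1).map A.mulVecLin) :=
            (Submodule.equivMapOfInjective _ hinj _).finrank_eq
        _ ≤ _ := Submodule.finrank_mono hZW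
    omega
  · -- easy direction
    rintro ⟨U, hU⟩
    refine ⟨U.map (iR F n), ?_⟩
    have h1 : finrank F (U.map (iR F n)) = finrank F U :=
      ((Submodule.equivMapOfInjective _ (iR_inj F n) U).finrank_eq).symm
    have h2 : msImage (Submodule.span F
          (insert (Matrix.fromBlocks 0 0 A 0).mulVecLin
            (Set.range fun i => (Matrix.fromBlocks A (B i) 0 0).mulVecLin))) (U.map (iR F n))
        = (msImage (Submodule.span F (Set.range fun i => (B i).mulVecLin)) U).map (iL F n) := by
      rw [msImage_span, msImage_span, Submodule.map_span]
      apply le_antisymm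
      · rw [Submodule.span_le]
        rintro x ⟨a, ha, u, hu, rfl⟩
        rcases Submodule.mem_map.mp hu with ⟨w, hw, rfl⟩
        rcases Set.mem_insert_iff.mp ha with rfl | ⟨i, rfl⟩
        · rw [Z_apply_iR]
          exact zero_mem _
        · rw [Y_apply_iR]
          exact Submodule.subset_span
            ⟨B i *ᵥ w, ⟨(B i).mulVecLin, ⟨i, rfl⟩, w, hw, Matrix.mulVecLin_apply _ _⟩, rfl⟩
      · rw [Submodule.span_le]
        rintro x ⟨y, ⟨a, ⟨i, rfl⟩, u, hu, rfl⟩, rfl⟩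
        refine Submodule.subset_span
          ⟨(Matrix.fromBlocks A (B i) 0 0).mulVecLin, Set.mem_insert_of_mem _ ⟨i, rfl⟩,
            iR F n u, Submodule.mem_map_of_mem hu, ?_⟩
        rw [Y_apply_iR, Matrix.mulVecLin_apply]
    have h3 : finrank F ((msImage (Submodule.span F
          (Set.range fun i => (B i).mulVecLin)) U).map (iL F n))
        = finrank F (msImage (Submodule.span F (Set.range fun i => (B i).mulVecLin)) U) :=
      ((Submodule.equivMapOfInjective _ (iL_inj F n) _).finrank_eq).symm
    rw [h1, h2, h3]
    exact hU
end
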